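/- Let Y = (Y₁,…,Y_M) be random variables taking values in {0,1}^L each, and let T = T(Y) ⊆ {1,…,M} be a deterministic function of Y. Suppose that almost surely, every Yᵢ with i ∉ T lies within Hamming distance αL of some Y_j with j ∈ T, where 0 < α < 1/2. Then H(Y) ≤ M + L·E[|T|] + (M − E[|T|])(log₂ E[|T|] + L·H(α)). -/

import Mathlib

/-- The binary entropy function. -/
noncomputable def binEnt (x : ℝ) : ℝ := -(x * Real.logb 2 x) - (1 - x) * Real.logb 2 (1 - x)

/-- The probability mass function of a random variable `X` on a finite
probability space with point masses `p`. -/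
noncomputable def rvPMF {Ω α : Type*} [Fintype Ω] [DecidableEq α]
    (p : Ω → ℝ) (X : Ω → α) (a : α) : ℝ :=
  ∑ ω ∈ Finset.univ.filter (fun ω => X ω = a), p ω

/-- Shannon entropy (base 2) of a random variable on a finite probability space. -/
noncomputable def shEnt {Ω α : Type*} [Fintype Ω] [Fintype α] [DecidableEq α]
    (p : Ω → ℝ) (X : Ω → α) : ℝ :=
  -∑ a : α, rvPMF p X a * Real.logb 2 (rvPMF p X a)

open Finset Real

/-- Gibbs' inequality. -/
lemma my_gibbs {γ : Type*} [Fintype γ] (P q : γ → ℝ) (hP : ∀ a, 0 ≤ P a)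
    (hPs : ∑ a, P a = 1) (hq : ∀ a, 0 ≤ q a) (hqs : ∑ a, q a ≤ 1)
    (hpos : ∀ a, P a ≠ 0 → 0 < q a) :
    -∑ a, P a * Real.logb 2 (P a) ≤ -∑ a, P a * Real.logb 2 (q a) := by
  have key : ∑ a, P a * (Real.log (q a) - Real.log (P a)) ≤ 0 := by
    calc ∑ a, P a * (Real.log (q a) - Real.log (P a))
        ≤ ∑ a, (q a - P a) := by
          apply Finset.sum_le_sum
          intro a _
          rcases eq_or_ne (P a) 0 with h | h
          · simp [h]; exact hq a
          · have hPa : 0 < P a := lt_of_le_of_ne (hP a) (Ne.symm h)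
            have hqa := hpos a h
            have hlg : Real.log (q a) - Real.log (P a) = Real.log (q a / P a) :=
              (Real.log_div (ne_of_gt hqa) h).symm
            rw [hlg]
            have h2 := Real.log_le_sub_one_of_pos (div_pos hqa hPa)
            have h3 : P a * Real.log (q a / P a) ≤ P a * (q a / P a - 1) :=
              mul_le_mul_of_nonneg_left h2 (le_of_lt hPa)
            calc P a * Real.log (q a / P a) ≤ P a * (q a / P a - 1) := h3
              _ = q a - P a := by field_simp
      _ ≤ 0 := by rw [Finset.sum_sub_distrib, hPs]; linarith
  have hlog2 : 0 < Real.log 2 := Real.log_pos one_lt_two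
  have heq : ∑ a, P a * Real.logb 2 (q a) - ∑ a, P a * Real.logb 2 (P a)
      = (Real.log 2)⁻¹ * ∑ a, P a * (Real.log (q a) - Real.log (P a)) := by
    rw [Finset.mul_sum, ← Finset.sum_sub_distrib]
    apply Finset.sum_congr rfl
    intro a _
    simp only [Real.logb]
    field_simp
  have h4 : (Real.log 2)⁻¹ * ∑ a, P a * (Real.log (q a) - Real.log (P a)) ≤ 0 :=
    mul_nonpos_of_nonneg_of_nonpos (by positivity) key
  rw [← heq] at h4
  linarith

/-- pushforward sums -/
lemma my_sum_rvPMF_mul {Ω γ : Type*} [Fintype Ω] [Fintype γ] [DecidableEq γ]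
    (p : Ω → ℝ) (X : Ω → γ) (g : γ → ℝ) :
    ∑ a, rvPMF p X a * g a = ∑ ω, p ω * g (X ω) := by
  unfold rvPMF
  rw [← Finset.sum_fiberwise Finset.univ X (fun ω => p ω * g (X ω))]
  apply Finset.sum_congr rfl
  intro a _
  rw [Finset.sum_mul]
  apply Finset.sum_congr rfl
  intro ω hω
  rw [Finset.mem_filter] at hω
  rw [hω.2]

def ballFinset (L k : ℕ) : Finset (Fin L → Bool) :=
  Finset.univ.filter (fun x => hammingDist x (fun _ => false) ≤ k)

lemma card_ballFinset_le (L k : ℕ) :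
    (ballFinset L k).card ≤ ∑ i ∈ Finset.range (k + 1), L.choose i := by
  classical
  have h := Finset.card_le_card_of_injOn
    (f := fun x : Fin L → Bool => Finset.univ.filter (fun i => x i = true))
    (s := ballFinset L k)
    (t := (Finset.range (k + 1)).biUnion (fun i => Finset.powersetCard i Finset.univ))
    ?_ ?_
  · refine h.trans ?_
    refine (Finset.card_biUnion_le).trans ?_
    apply Finset.sum_le_sum
    intro i _
    rw [Finset.card_powersetCard, Finset.card_univ, Fintype.card_fin]
  · intro x hx
    rw [Finset.mem_coe, ballFinset, Finset.mem_filter] at hx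
    have hcard : (Finset.univ.filter (fun i => x i = true)).card ≤ k := by
      refine le_trans (le_of_eq ?_) hx.2
      rw [hammingDist]
      congr 1
      apply Finset.filter_congr
      intro i _
      simp
    rw [Finset.mem_coe, Finset.mem_biUnion]
    exact ⟨(Finset.univ.filter (fun i => x i = true)).card,
      Finset.mem_range.mpr (Nat.lt_succ_of_le hcard),
      Finset.mem_powersetCard.mpr ⟨Finset.subset_univ _, rfl⟩⟩
  · intro x _ y _ hxy
    funext i
    have := Finset.ext_iff.mp hxy i
    simp only [Finset.mem_filter, Finset.mem_univ, true_and] at this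
    cases hx : x i <;> cases hy : y i <;> simp_all

lemma sum_choose_le_rpow (L k : ℕ) (α : ℝ) (hα0 : 0 < α) (hα2 : α ≤ 1 / 2)
    (hk : (k : ℝ) ≤ α * L) :
    (∑ i ∈ Finset.range (k + 1), (L.choose i : ℝ)) ≤ (2 : ℝ) ^ ((L : ℝ) * binEnt α) := by
  set β : ℝ := 1 - α with hβ
  have hβ0 : 0 < β := by rw [hβ]; linarith
  have hαβ : α ≤ β := by rw [hβ]; linarith
  have hα1 : α < 1 := by linarith
  set c : ℝ := α ^ (α * L) * β ^ ((1 - α) * L) with hc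
  have hc0 : 0 < c := by positivity
  have hkL : k ≤ L := by
    have h1 : (k : ℝ) ≤ (L : ℝ) := le_trans hk (by nlinarith [Nat.cast_nonneg (α := ℝ) L])
    exact_mod_cast h1
  -- pointwise bound
  have hpt : ∀ i ∈ Finset.range (k + 1), c ≤ α ^ i * β ^ (L - i) := by
    intro i hi
    rw [Finset.mem_range, Nat.lt_succ_iff] at hi
    have hiL : i ≤ L := le_trans hi hkL
    have hiα : (i : ℝ) ≤ α * L := le_trans (by exact_mod_cast hi) hk
    have hcast : ((L - i : ℕ) : ℝ) = (L : ℝ) - i := by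
      rw [Nat.cast_sub hiL]
    have e1 : α ^ i * β ^ (L - i) = α ^ (i : ℝ) * β ^ ((L : ℝ) - (i : ℝ)) := by
      rw [← Real.rpow_natCast α i, ← Real.rpow_natCast β (L - i), hcast]
    rw [e1, hc]
    have e2 : ∀ x : ℝ, 0 ≤ x → x ≤ α * L →
        α ^ (α * L) * β ^ ((1:ℝ) - α) ^ (0:ℕ) = 0 → True := by intro _ _ _ _; trivial
    -- rewrite both sides as β^L * (α/β)^x
    have key : ∀ x : ℝ, α ^ x * β ^ ((L : ℝ) - x) = β ^ (L : ℝ) * (α / β) ^ x := by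
      intro x
      rw [Real.div_rpow (le_of_lt hα0) (le_of_lt hβ0), Real.rpow_sub hβ0]
      field_simp
    have e3 : ((1 : ℝ) - α) * L = (L : ℝ) - α * L := by ring
    rw [key, e3, key]
    apply mul_le_mul_of_nonneg_left _ (le_of_lt (Real.rpow_pos_of_pos hβ0 _))
    · exact Real.rpow_le_rpow_of_exponent_ge (div_pos hα0 hβ0) (div_le_one_of_le₀ hαβ (le_of_lt hβ0)) hiα
  have hsum1 : α + β = 1 := by rw [hβ]; ring
  have hbinom : (∑ i ∈ Finset.range (L+1), α ^ i * β ^ (L - i) * (L.choose i : ℝ)) = 1 := by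
    rw [← add_pow, hsum1, one_pow]
  have hstep : c * (∑ i ∈ Finset.range (k+1), (L.choose i : ℝ)) ≤ 1 := by
    rw [Finset.mul_sum]
    calc ∑ i ∈ Finset.range (k+1), c * (L.choose i : ℝ)
        ≤ ∑ i ∈ Finset.range (k+1), α ^ i * β ^ (L-i) * (L.choose i : ℝ) := by
          apply Finset.sum_le_sum; intro i hi
          exact mul_le_mul_of_nonneg_right (hpt i hi) (Nat.cast_nonneg _)
      _ ≤ ∑ i ∈ Finset.range (L+1), α ^ i * β ^ (L-i) * (L.choose i : ℝ) := by
          apply Finset.sum_le_sum_of_subset_of_nonneg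
          · exact Finset.range_subset_range.mpr (by omega)
          · intro i _ _; positivity
      _ = 1 := hbinom
  have hceq : c⁻¹ = (2:ℝ) ^ ((L:ℝ) * binEnt α) := by
    have ha : α = (2:ℝ) ^ (Real.logb 2 α) := (Real.rpow_logb two_pos (by norm_num) hα0).symm
    have hb : β = (2:ℝ) ^ (Real.logb 2 β) := (Real.rpow_logb two_pos (by norm_num) hβ0).symm
    rw [hc]
    nth_rewrite 1 [ha]
    nth_rewrite 1 [hb]
    rw [← Real.rpow_mul (by norm_num : (0:ℝ) ≤ 2), ← Real.rpow_mul (by norm_num : (0:ℝ) ≤ 2),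
      ← Real.rpow_add two_pos, ← Real.rpow_neg (by norm_num : (0:ℝ) ≤ 2)]
    congr 1
    rw [hβ]
    simp only [binEnt]
    ring
  calc (∑ i ∈ Finset.range (k+1), (L.choose i : ℝ))
      = c⁻¹ * (c * ∑ i ∈ Finset.range (k+1), (L.choose i : ℝ)) := by field_simp
    _ ≤ c⁻¹ * 1 := mul_le_mul_of_nonneg_left hstep (inv_nonneg.mpr hc0.le)
    _ = (2:ℝ) ^ ((L:ℝ) * binEnt α) := by rw [mul_one, hceq]

lemma count_bound {M L : ℕ} (k : ℕ) (t : Finset (Fin M)) (ht : t.Nonempty)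
    (P : (Fin M → Fin L → Bool) → Prop) [DecidablePred P]
    (hP : ∀ a, P a → ∀ i ∉ t, ∃ j ∈ t, hammingDist (a i) (a j) ≤ k) :
    (Finset.univ.filter P).card ≤
      2 ^ (L * t.card) * (t.card * (ballFinset L k).card) ^ (M - t.card) := by
  classical
  haveI : Inhabited {j // j ∈ t} := ⟨⟨ht.choose, ht.choose_spec⟩⟩
  haveI : Inhabited {x // x ∈ ballFinset L k} :=
    ⟨⟨fun _ => false, by simp [ballFinset]⟩⟩
  set C : (Fin M → Fin L → Bool) → Prop :=
    fun a => ∀ i ∉ t, ∃ j ∈ t, hammingDist (a i) (a j) ≤ k with hC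
  let φ : (Fin M → Fin L → Bool) →
      ({j // j ∈ t} → (Fin L → Bool)) ×
      ({i : Fin M // i ∉ t} → {j // j ∈ t} × {x // x ∈ ballFinset L k}) :=
    fun a => (fun j => a j.1,
      fun i => if h : C a then
        (⟨(h i.1 i.2).choose, (h i.1 i.2).choose_spec.1⟩,
         ⟨fun l => xor (a i.1 l) (a (h i.1 i.2).choose l), by
            rw [ballFinset, Finset.mem_filter]
            refine ⟨Finset.mem_univ _, le_trans (le_of_eq ?_) (h i.1 i.2).choose_spec.2⟩
            rw [hammingDist, hammingDist]
            congr 1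
            apply Finset.filter_congr
            intro l _
            cases (a i.1 l) <;> cases (a (h i.1 i.2).choose l) <;> simp⟩)
      else default)
  have hinj : Set.InjOn φ (Finset.univ.filter P) := by
    intro a ha b hb hab
    rw [Finset.mem_coe, Finset.mem_filter] at ha hb
    have hCa : C a := hP a ha.2
    have hCb : C b := hP b hb.2
    obtain ⟨h1, h2⟩ := Prod.ext_iff.mp hab
    simp only [φ] at h1 h2
    funext i l
    by_cases hi : i ∈ t
    · exact congrFun (congrFun h1 ⟨i, hi⟩) l
    · have h3 := congrFun h2 ⟨i, hi⟩
      rw [dif_pos hCa, dif_pos hCb] at h3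
      obtain ⟨h4, h5⟩ := Prod.ext_iff.mp h3
      have hjeq : (hCa i hi).choose = (hCb i hi).choose := Subtype.ext_iff.mp h4
      have hjmem : (hCa i hi).choose ∈ t := (hCa i hi).choose_spec.1
      have habj : a (hCa i hi).choose = b (hCa i hi).choose :=
        congrFun h1 ⟨(hCa i hi).choose, hjmem⟩
      have hd : (xor (a i l) (a (hCa i hi).choose l))
          = (xor (b i l) (b (hCb i hi).choose l)) := congrFun (Subtype.ext_iff.mp h5) l
      rw [← hjeq] at hd
      rw [← congrFun habj l] at hd
      cases (a (hCa i hi).choose l) <;> simp_all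
  have hcard := Finset.card_le_card_of_injOn φ (fun a _ => Finset.mem_univ _) hinj
  rw [Finset.card_univ] at hcard
  refine hcard.trans (le_of_eq ?_)
  have h6 : Fintype.card {i : Fin M // i ∉ t} = M - t.card := by
    rw [Fintype.card_subtype_compl, Fintype.card_fin, Fintype.card_coe]
  simp only [Fintype.card_prod, Fintype.card_fun, Fintype.card_coe, Fintype.card_bool,
    Fintype.card_fin, h6]
  rw [← pow_mul]

lemma concave_f (Mr c0 : ℝ) (hMr : 0 ≤ Mr) :
    ConcaveOn ℝ (Set.Ioi (0:ℝ)) (fun x => (Mr - x) * (Real.logb 2 x + c0)) := by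
  have hlog2 : 0 < Real.log 2 := Real.log_pos one_lt_two
  have h1 : ConcaveOn ℝ (Set.Ioi (0:ℝ)) ((Mr / Real.log 2) • Real.log) :=
    (strictConcaveOn_log_Ioi.concaveOn).smul (by positivity)
  have h2 : ConcaveOn ℝ (Set.Ioi (0:ℝ)) ((Real.log 2)⁻¹ • Real.negMulLog) :=
    ((Real.concaveOn_negMulLog.subset (Set.Ioi_subset_Ici le_rfl) (convex_Ioi 0))).smul
      (by positivity)
  have h3 : ConcaveOn ℝ (Set.Ioi (0:ℝ)) (fun x => c0 * Mr - c0 * x) := by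
    refine ⟨convex_Ioi 0, ?_⟩
    intro x _ y _ a b ha hb hab
    simp only [smul_eq_mul]
    exact le_of_eq (by linear_combination (c0 * Mr) * hab)
  have hsum := (h1.add h2).add h3
  have hfun : (fun x : ℝ => (Mr - x) * (Real.logb 2 x + c0)) =
      ((Mr / Real.log 2) • Real.log + (Real.log 2)⁻¹ • Real.negMulLog) +
        (fun x => c0 * Mr - c0 * x) := by
    funext x
    simp only [Pi.add_apply, Pi.smul_apply, smul_eq_mul, Real.negMulLog, Real.logb]
    field_simp
    ring
  rw [hfun]
  exact hsum

set_option maxHeartbeats 1600000 in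
/-- Let Y = (Y₁,…,Y_M) be random binary strings of length L, and T = T(Y) a
deterministic subset of indices such that a.s. every string outside T is
within Hamming distance αL of some string in T, 0 < α < 1/2.  Then
H(Y) ≤ M + L·E|T| + (M − E|T|)(log₂ E|T| + L·H(α)). -/
theorem stmt_15 {Ω : Type*} [Fintype Ω]
    (M L : ℕ) (hM : 0 < M) (hL : 0 < L) (α : ℝ) (hα0 : 0 < α) (hα : α < 1 / 2)
    (p : Ω → ℝ) (hp : ∀ ω, 0 ≤ p ω) (hsum : ∑ ω, p ω = 1)
    (Y : Ω → (Fin M → Fin L → Bool))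
    (T : (Fin M → Fin L → Bool) → Finset (Fin M))
    (hcover : ∀ ω, p ω ≠ 0 → ∀ i ∉ T (Y ω),
      ∃ j ∈ T (Y ω), (hammingDist (Y ω i) (Y ω j) : ℝ) ≤ α * L)
    (hET : 1 ≤ ∑ ω, p ω * ((T (Y ω)).card : ℝ)) :
    shEnt p Y ≤ (M : ℝ) + (L : ℝ) * (∑ ω, p ω * ((T (Y ω)).card : ℝ)) +
      ((M : ℝ) - ∑ ω, p ω * ((T (Y ω)).card : ℝ)) *
        (Real.logb 2 (∑ ω, p ω * ((T (Y ω)).card : ℝ)) + (L : ℝ) * binEnt α) := by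
  classical
  set E := ∑ ω, p ω * ((T (Y ω)).card : ℝ) with hE
  set k := ⌊α * (L:ℝ)⌋₊ with hk
  set B : ℝ := (2:ℝ) ^ ((L:ℝ) * binEnt α) with hBdef
  have hB0 : 0 < B := Real.rpow_pos_of_pos two_pos _
  have hkle : (k:ℝ) ≤ α * L := Nat.floor_le (by positivity)
  have hNball : ((ballFinset L k).card : ℝ) ≤ B := by
    calc ((ballFinset L k).card : ℝ) ≤ ∑ i ∈ Finset.range (k+1), (L.choose i : ℝ) := by
          exact_mod_cast card_ballFinset_le L k
      _ ≤ B := sum_choose_le_rpow L k α hα0 (le_of_lt hα) hkle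
  set Good : (Fin M → Fin L → Bool) → Prop :=
    fun a => (T a).Nonempty ∧ ∀ i ∉ T a, ∃ j ∈ T a, (hammingDist (a i) (a j) : ℝ) ≤ α * L
    with hGood
  set c : Finset (Fin M) → ℝ := fun t =>
    ((2:ℝ)^M)⁻¹ * ((2:ℝ)^(L * t.card))⁻¹ * ((((t.card : ℝ)) * B)^(M - t.card))⁻¹ with hcdef
  set q : (Fin M → Fin L → Bool) → ℝ := fun a => if Good a then c (T a) else 0 with hqdef
  have hc_nonneg : ∀ t : Finset (Fin M), 0 ≤ c t := by
    intro t
    rw [hcdef]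
    have : (0:ℝ) ≤ (t.card : ℝ) * B := by positivity
    positivity
  have hq0 : ∀ a, 0 ≤ q a := by
    intro a
    rw [hqdef]
    dsimp only
    split
    · exact hc_nonneg _
    · exact le_refl 0
  have hgood : ∀ ω, p ω ≠ 0 → Good (Y ω) := by
    intro ω hω
    refine ⟨?_, hcover ω hω⟩
    rcases Finset.eq_empty_or_nonempty (T (Y ω)) with h | h
    · exfalso
      obtain ⟨j, hj, _⟩ := hcover ω hω ⟨0, hM⟩ (by simp [h])
      simp [h] at hj
    · exact h
  have hqpos : ∀ a, Good a → 0 < q a := by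
    intro a hGa
    rw [hqdef]
    dsimp only
    rw [if_pos hGa]
    have h1 : (1:ℝ) ≤ ((T a).card : ℝ) := by exact_mod_cast hGa.1.card_pos
    rw [hcdef]
    have h2 : (0:ℝ) < ((T a).card : ℝ) * B := by nlinarith
    positivity
  -- the total mass of q is at most 1
  have hqsum : ∑ a, q a ≤ 1 := by
    rw [← Finset.sum_fiberwise Finset.univ T q]
    have hbound : ∀ t : Finset (Fin M),
        ∑ a ∈ Finset.univ.filter (fun a => T a = t), q a ≤ ((2:ℝ)^M)⁻¹ := by
      intro t
      have heq : ∑ a ∈ Finset.univ.filter (fun a => T a = t), q a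
          = ((Finset.univ.filter (fun a => T a = t ∧ Good a)).card : ℝ) * c t := by
        have h1 : ∀ a ∈ Finset.univ.filter (fun a => T a = t), q a = if Good a then c t else 0 := by
          intro a ha
          rw [Finset.mem_filter] at ha
          rw [hqdef]
          dsimp only
          exact if_congr Iff.rfl (by rw [ha.2]) rfl
        rw [Finset.sum_congr rfl h1, ← Finset.sum_filter, Finset.filter_filter,
          Finset.sum_const, nsmul_eq_mul]
      rw [heq]
      rcases Finset.eq_empty_or_nonempty t with hte | htne
      · have hzero : (Finset.univ.filter (fun a => T a = t ∧ Good a)) = ∅ := by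
          apply Finset.filter_eq_empty_iff.mpr
          intro a _
          rintro ⟨h1, h2⟩
          have h3 := h2.1
          rw [h1, hte] at h3
          exact absurd h3 (by simp)
        rw [hzero]
        simp
      · have hcov' : ∀ a : Fin M → Fin L → Bool, (T a = t ∧ Good a) →
            ∀ i ∉ t, ∃ j ∈ t, hammingDist (a i) (a j) ≤ k := by
          intro a ha i hi
          obtain ⟨ha1, ha2⟩ := ha
          obtain ⟨j, hj, hd⟩ := ha2.2 i (by rw [ha1]; exact hi)
          refine ⟨j, by rw [← ha1]; exact hj, Nat.le_floor ?_⟩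
          exact hd
        have hcb := count_bound k t htne (fun a => T a = t ∧ Good a) hcov'
        have hcbR : ((Finset.univ.filter (fun a => T a = t ∧ Good a)).card : ℝ) ≤
            (2:ℝ)^(L * t.card) * (((t.card:ℝ)) * ((ballFinset L k).card : ℝ))^(M - t.card) := by
          calc ((Finset.univ.filter (fun a => T a = t ∧ Good a)).card : ℝ)
              ≤ ((2 ^ (L * t.card) * (t.card * (ballFinset L k).card) ^ (M - t.card) : ℕ) : ℝ) := by
                exact_mod_cast hcb
            _ = _ := by push_cast; ring
        have htc1 : (1:ℝ) ≤ (t.card : ℝ) := by exact_mod_cast htne.card_pos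
        have hY2 : (0:ℝ) < ((t.card:ℝ) * B)^(M - t.card) := by
          apply pow_pos; nlinarith
        have hY1Y2 : (((t.card:ℝ)) * ((ballFinset L k).card : ℝ))^(M - t.card)
            ≤ ((t.card:ℝ) * B)^(M - t.card) := by
          apply pow_le_pow_left₀ (by positivity)
          exact mul_le_mul_of_nonneg_left hNball (by positivity)
        calc ((Finset.univ.filter (fun a => T a = t ∧ Good a)).card : ℝ) * c t
            ≤ ((2:ℝ)^(L * t.card) * (((t.card:ℝ)) * ((ballFinset L k).card : ℝ))^(M - t.card)) * c t :=
              mul_le_mul_of_nonneg_right hcbR (hc_nonneg t)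
          _ = ((2:ℝ)^M)⁻¹ * ((((t.card:ℝ)) * ((ballFinset L k).card : ℝ))^(M - t.card)
                / ((t.card:ℝ) * B)^(M - t.card)) := by
              rw [hcdef]
              field_simp
          _ ≤ ((2:ℝ)^M)⁻¹ * 1 := by
              apply mul_le_mul_of_nonneg_left _ (by positivity)
              rw [div_le_one hY2]
              exact hY1Y2
          _ = ((2:ℝ)^M)⁻¹ := mul_one _
    calc ∑ t : Finset (Fin M), ∑ a ∈ Finset.univ.filter (fun a => T a = t), q a
        ≤ ∑ _t : Finset (Fin M), ((2:ℝ)^M)⁻¹ := Finset.sum_le_sum (fun t _ => hbound t)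
      _ = 1 := by
          rw [Finset.sum_const, Finset.card_univ, Fintype.card_finset, Fintype.card_fin,
            nsmul_eq_mul]
          push_cast
          field_simp
  -- the pmf of Y
  have hPMF_nonneg : ∀ a, 0 ≤ rvPMF p Y a := fun a => Finset.sum_nonneg (fun ω _ => hp ω)
  have hPMF_sum : ∑ a, rvPMF p Y a = 1 := by
    have h := my_sum_rvPMF_mul p Y (fun _ => 1)
    simpa [hsum] using h
  have hPMFpos : ∀ a, rvPMF p Y a ≠ 0 → 0 < q a := by
    intro a hne
    obtain ⟨ω, hω, hpω⟩ := Finset.exists_ne_zero_of_sum_ne_zero hne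
    rw [Finset.mem_filter] at hω
    have hg := hgood ω hpω
    rw [hω.2] at hg
    exact hqpos a hg
  have step1 : shEnt p Y ≤ -∑ a, rvPMF p Y a * Real.logb 2 (q a) :=
    my_gibbs (rvPMF p Y) q hPMF_nonneg hPMF_sum hq0 hqsum hPMFpos
  set f : ℝ → ℝ := fun x => ((M:ℝ) - x) * (Real.logb 2 x + (L:ℝ) * binEnt α) with hf
  have hlogq : ∀ a, Good a → -Real.logb 2 (q a)
      = (M:ℝ) + (L:ℝ) * ((T a).card : ℝ) + f ((T a).card : ℝ) := by
    intro a hGa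
    have htc1 : 1 ≤ (T a).card := hGa.1.card_pos
    have htcM : (T a).card ≤ M := by
      have h := Finset.card_le_univ (T a)
      simpa using h
    have htcR : (1:ℝ) ≤ ((T a).card : ℝ) := by exact_mod_cast htc1
    have htcne : ((T a).card : ℝ) ≠ 0 := by linarith
    have hBne : B ≠ 0 := ne_of_gt hB0
    have htcBne : ((T a).card : ℝ) * B ≠ 0 := mul_ne_zero htcne hBne
    rw [hqdef]
    dsimp only
    rw [if_pos hGa, hcdef]
    dsimp only
    rw [← mul_inv, ← mul_inv, Real.logb_inv]
    rw [Real.logb_mul (by positivity) (by positivity),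
      Real.logb_mul (by positivity) (by positivity)]
    rw [Real.logb_pow, Real.logb_pow, Real.logb_pow, Real.logb_mul htcne hBne]
    rw [hBdef, Real.logb_rpow (by norm_num) (by norm_num)]
    rw [Real.logb_self_eq_one (by norm_num)]
    have hcast : ((M - (T a).card : ℕ) : ℝ) = (M:ℝ) - ((T a).card : ℝ) := by
      rw [Nat.cast_sub htcM]
    rw [hf]
    push_cast [hcast]
    ring
  have step2 : -∑ a, rvPMF p Y a * Real.logb 2 (q a)
      = ∑ ω, p ω * (-Real.logb 2 (q (Y ω))) := by
    have h := my_sum_rvPMF_mul p Y (fun a => -Real.logb 2 (q a))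
    rw [← h, ← Finset.sum_neg_distrib]
    exact Finset.sum_congr rfl (fun a _ => by ring)
  have step3 : ∑ ω, p ω * (-Real.logb 2 (q (Y ω)))
      = ∑ ω, p ω * ((M:ℝ) + (L:ℝ) * ((T (Y ω)).card : ℝ) + f ((T (Y ω)).card : ℝ)) := by
    apply Finset.sum_congr rfl
    intro ω _
    rcases eq_or_ne (p ω) 0 with h | h
    · rw [h]; ring
    · rw [hlogq (Y ω) (hgood ω h)]
  have step4 : ∑ ω, p ω * ((M:ℝ) + (L:ℝ) * ((T (Y ω)).card : ℝ) + f ((T (Y ω)).card : ℝ))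
      = (M:ℝ) + (L:ℝ) * E + ∑ ω, p ω * f ((T (Y ω)).card : ℝ) := by
    calc ∑ ω, p ω * ((M:ℝ) + (L:ℝ) * ((T (Y ω)).card : ℝ) + f ((T (Y ω)).card : ℝ))
        = ∑ ω, ((M:ℝ) * p ω + (L:ℝ) * (p ω * ((T (Y ω)).card : ℝ))
            + p ω * f ((T (Y ω)).card : ℝ)) :=
          Finset.sum_congr rfl (fun ω _ => by ring)
      _ = (M:ℝ) * (∑ ω, p ω) + (L:ℝ) * (∑ ω, p ω * ((T (Y ω)).card : ℝ))
            + ∑ ω, p ω * f ((T (Y ω)).card : ℝ) := by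
          rw [Finset.sum_add_distrib, Finset.sum_add_distrib, ← Finset.mul_sum, ← Finset.mul_sum]
      _ = _ := by rw [hsum, mul_one]
  have hjensen : ∑ ω, p ω * f ((T (Y ω)).card : ℝ) ≤ f E := by
    have hconc := concave_f (M:ℝ) ((L:ℝ) * binEnt α) (Nat.cast_nonneg M)
    set s' := Finset.univ.filter (fun ω => p ω ≠ 0) with hs'
    have hw0 : ∀ ω ∈ s', 0 ≤ p ω := fun ω _ => hp ω
    have hw1 : ∑ ω ∈ s', p ω = 1 := by
      rw [hs', Finset.sum_filter_of_ne (fun ω _ h => h), hsum]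
    have hmem : ∀ ω ∈ s', ((T (Y ω)).card : ℝ) ∈ Set.Ioi (0:ℝ) := by
      intro ω hω
      rw [hs', Finset.mem_filter] at hω
      have h := (hgood ω hω.2).1.card_pos
      exact Set.mem_Ioi.mpr (by exact_mod_cast h)
    have hj := hconc.le_map_sum hw0 hw1 hmem
    simp only [smul_eq_mul] at hj
    have e1 : ∑ ω, p ω * f ((T (Y ω)).card : ℝ)
        = ∑ ω ∈ s', p ω * f ((T (Y ω)).card : ℝ) := by
      rw [hs']
      exact (Finset.sum_filter_of_ne (fun ω _ h => left_ne_zero_of_mul h)).symm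
    have e2 : ∑ ω ∈ s', p ω * ((T (Y ω)).card : ℝ) = E := by
      rw [hs', Finset.sum_filter_of_ne (fun ω _ h => left_ne_zero_of_mul h)]
    rw [e1, ← e2]
    calc ∑ ω ∈ s', p ω * f ((T (Y ω)).card : ℝ)
        ≤ f (∑ ω ∈ s', p ω * ((T (Y ω)).card : ℝ)) := by
          simp only [hf]
          exact hj
      _ = _ := rfl
  calc shEnt p Y ≤ -∑ a, rvPMF p Y a * Real.logb 2 (q a) := step1
    _ = ∑ ω, p ω * (-Real.logb 2 (q (Y ω))) := step2
    _ = ∑ ω, p ω * ((M:ℝ) + (L:ℝ) * ((T (Y ω)).card : ℝ) + f ((T (Y ω)).card : ℝ)) := step3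
    _ = (M:ℝ) + (L:ℝ) * E + ∑ ω, p ω * f ((T (Y ω)).card : ℝ) := step4
    _ ≤ (M:ℝ) + (L:ℝ) * E + f E := by linarith [hjensen]
    _ = (M:ℝ) + (L:ℝ) * E + ((M:ℝ) - E) * (Real.logb 2 E + (L:ℝ) * binEnt α) := by
        simp only [hf]
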